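/- Let T(λ) = -B_0 + λI + B_1/(λ - α_1) + ... + B_m/(λ - α_m), where B_i are n×n unitary matrices and α_i are distinct complex numbers. If λ_0 is an eigenvalue of T(λ), then |λ_0| ≤ √(((2m+1) + √(4m+1))/2) + max{|α_i| : 1 ≤ i ≤ m}. -/

import Mathlib

open Matrix in
private lemma sum_mulVec' {k n : ℕ} (M : Fin k → Matrix (Fin n) (Fin n) ℂ) (v : Fin n → ℂ) :
    (∑ i, M i) *ᵥ v = ∑ i, (M i *ᵥ v) := by
  ext j
  simp only [Matrix.mulVec, dotProduct, Matrix.sum_apply, Finset.sum_apply,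
    Finset.sum_mul]
  rw [Finset.sum_comm]

open Matrix in
private lemma unitary_norm_mulVec {n : ℕ} (A : Matrix (Fin n) (Fin n) ℂ)
    (hA : A ∈ Matrix.unitaryGroup (Fin n) ℂ) (w : Fin n → ℂ) :
    ‖(WithLp.equiv 2 (Fin n → ℂ)).symm (A *ᵥ w)‖ = ‖(WithLp.equiv 2 (Fin n → ℂ)).symm w‖ := by
  have h1 : (inner ℂ ((WithLp.equiv 2 (Fin n → ℂ)).symm (A *ᵥ w))
      ((WithLp.equiv 2 (Fin n → ℂ)).symm (A *ᵥ w)) : ℂ)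
      = inner ℂ ((WithLp.equiv 2 (Fin n → ℂ)).symm w) ((WithLp.equiv 2 (Fin n → ℂ)).symm w) := by
    simp only [WithLp.equiv_symm_apply, EuclideanSpace.inner_toLp_toLp]
    rw [dotProduct_comm, star_mulVec, dotProduct_mulVec, vecMul_vecMul]
    have : Aᴴ * A = 1 := hA.1
    rw [this, vecMul_one, dotProduct_comm]
  rw [@norm_eq_sqrt_re_inner ℂ, @norm_eq_sqrt_re_inner ℂ, h1]

private lemma quad_contra {t s mm : ℝ} (hs1 : 1 ≤ s) (hts : s < t) (ht0 : 0 < t)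
    (hrle : t ≤ 1 + mm * t⁻¹) (hsquad : s ^ 2 = s + mm) : False := by
  have h6 : t * (mm * t⁻¹) = mm := by field_simp
  have htq : t ^ 2 ≤ t + mm := by nlinarith [mul_le_mul_of_nonneg_left hrle ht0.le]
  nlinarith

/-- If the coefficients `B₀, B₁, …, Bₘ` of
`T(λ) = -B₀ + λI + Σ Bᵢ/(λ - αᵢ)` are unitary `n×n` matrices and `λ₀` is an eigenvalue
of `T`, then `|λ₀| ≤ √(((2m+1) + √(4m+1))/2) + max_i |αᵢ|`. -/
theorem stmt_10 (m n : ℕ) (hm : 0 < m)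
    (B0 : Matrix (Fin n) (Fin n) ℂ) (B : Fin m → Matrix (Fin n) (Fin n) ℂ)
    (hB0 : B0 ∈ Matrix.unitaryGroup (Fin n) ℂ)
    (hB : ∀ i, B i ∈ Matrix.unitaryGroup (Fin n) ℂ)
    (α : Fin m → ℂ) (hα : Function.Injective α)
    (lam0 : ℂ) (hpole : ∀ i, lam0 ≠ α i) (v : Fin n → ℂ) (hv : v ≠ 0)
    (heig : (-B0 + lam0 • (1 : Matrix (Fin n) (Fin n) ℂ) +
        ∑ i, (lam0 - α i)⁻¹ • B i).mulVec v = 0) :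
    ‖lam0‖ ≤ Real.sqrt ((2 * m + 1 + Real.sqrt (4 * m + 1)) / 2) +
      Finset.univ.sup' (Finset.univ_nonempty_iff.mpr (Fin.pos_iff_nonempty.mp hm))
        (fun i => ‖α i‖) := by
  set d := Finset.univ.sup' (Finset.univ_nonempty_iff.mpr (Fin.pos_iff_nonempty.mp hm))
      (fun i => ‖α i‖) with hd
  set r := ‖lam0‖ with hr
  -- the radical simplifies
  have h4m : (0:ℝ) ≤ 4 * m + 1 := by positivity
  have hsq : Real.sqrt (4 * m + 1) ^ 2 = 4 * m + 1 := Real.sq_sqrt h4m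
  have hsqnn : (0:ℝ) ≤ Real.sqrt (4 * m + 1) := Real.sqrt_nonneg _
  set s : ℝ := (1 + Real.sqrt (4 * m + 1)) / 2 with hsdef
  have hs_eq : Real.sqrt ((2 * m + 1 + Real.sqrt (4 * m + 1)) / 2) = s := by
    have h1 : s ^ 2 = (2 * m + 1 + Real.sqrt (4 * m + 1)) / 2 := by
      rw [hsdef]; nlinarith [hsq]
    rw [← h1, Real.sqrt_sq (by positivity)]
  rw [hs_eq]
  have hs1 : (1:ℝ) ≤ s := by
    have : (1:ℝ) ≤ Real.sqrt (4 * m + 1) := by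
      nlinarith [hsq, hsqnn, show (1:ℝ) ≤ (m:ℝ) from by exact_mod_cast hm]
    rw [hsdef]; linarith
  -- d ≥ 0
  have hd0 : 0 ≤ d := by
    have := Finset.le_sup' (fun i => ‖α i‖)
      (Finset.mem_univ (⟨0, hm⟩ : Fin m))
    exact le_trans (norm_nonneg _) this
  by_contra hcon
  push_neg at hcon
  -- so r > s + d
  have hrd : s + d < r := hcon
  set t : ℝ := r - d with htdef
  have hts : s < t := by rw [htdef]; linarith
  have ht0 : 0 < t := by linarith
  -- each |λ0 - αi| ≥ t
  have hαd : ∀ i, ‖α i‖ ≤ d := fun i =>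
    Finset.le_sup' (fun i => ‖α i‖) (Finset.mem_univ i)
  have hpol : ∀ i, t ≤ ‖lam0 - α i‖ := by
    intro i
    have h7 : ‖lam0‖ - ‖α i‖ ≤ ‖lam0 - α i‖ := by
      simpa using norm_sub_norm_le lam0 (α i)
    have := hαd i
    rw [htdef]; linarith
  -- rearrange eigen equation
  have hveq : lam0 • v = B0.mulVec v - ∑ i, (lam0 - α i)⁻¹ • ((B i).mulVec v) := by
    have h := heig
    rw [Matrix.add_mulVec, Matrix.add_mulVec, Matrix.neg_mulVec,
      Matrix.smul_mulVec, Matrix.one_mulVec, sum_mulVec'] at h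
    simp only [Matrix.smul_mulVec] at h
    have h2 : lam0 • v + ∑ i, (lam0 - α i)⁻¹ • ((B i).mulVec v) - B0.mulVec v = 0 := by
      rw [← h]; abel
    rw [eq_sub_iff_add_eq]
    exact sub_eq_zero.mp h2
  -- norms in EuclideanSpace
  set e := (WithLp.equiv 2 (Fin n → ℂ)).symm with he
  have hnv : 0 < ‖e v‖ := by
    rw [norm_pos_iff]
    intro h
    exact hv (by simpa [he] using congrArg (WithLp.equiv 2 (Fin n → ℂ)) h)
  have hkey : r * ‖e v‖ ≤ ‖e v‖ + (m : ℝ) * (t⁻¹ * ‖e v‖) := by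
    have h1 : e (lam0 • v) = lam0 • e v := rfl
    have h2 : e (B0.mulVec v - ∑ i, (lam0 - α i)⁻¹ • ((B i).mulVec v))
        = e (B0.mulVec v) - ∑ i, (lam0 - α i)⁻¹ • e ((B i).mulVec v) := by
      have hmap : ∀ w : Fin n → ℂ, e w = (WithLp.linearEquiv 2 ℂ (Fin n → ℂ)).symm w :=
        fun _ => rfl
      simp only [hmap, map_sub, map_sum, map_smul]
    have h3 : ‖lam0 • e v‖ = r * ‖e v‖ := by
      rw [norm_smul]
    calc r * ‖e v‖ = ‖lam0 • e v‖ := h3.symm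
      _ = ‖e (B0.mulVec v) - ∑ i, (lam0 - α i)⁻¹ • e ((B i).mulVec v)‖ := by
          rw [← h2, ← h1, hveq]
      _ ≤ ‖e (B0.mulVec v)‖ + ‖∑ i, (lam0 - α i)⁻¹ • e ((B i).mulVec v)‖ := norm_sub_le _ _
      _ ≤ ‖e v‖ + ∑ i : Fin m, (t⁻¹ * ‖e v‖) := by
          gcongr
          · exact le_of_eq (unitary_norm_mulVec B0 hB0 v)
          · refine le_trans (norm_sum_le _ _) (Finset.sum_le_sum fun i _ => ?_)
            rw [norm_smul, unitary_norm_mulVec (B i) (hB i) v]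
            have h4 : ‖(lam0 - α i)⁻¹‖ ≤ t⁻¹ := by
              rw [norm_inv]
              exact inv_anti₀ ht0 (hpol i)
            exact mul_le_mul_of_nonneg_right h4 (norm_nonneg _)
      _ = ‖e v‖ + (m : ℝ) * (t⁻¹ * ‖e v‖) := by
          rw [Finset.sum_const, Finset.card_univ, Fintype.card_fin, nsmul_eq_mul]
  -- conclude r ≤ 1 + m / t
  have hrle : r ≤ 1 + (m : ℝ) * t⁻¹ := by
    have := hkey
    rw [show ‖e v‖ + (m : ℝ) * (t⁻¹ * ‖e v‖) = (1 + (m : ℝ) * t⁻¹) * ‖e v‖ by ring] at this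
    exact le_of_mul_le_mul_right (by linarith) hnv
  have htr : t ≤ r := by rw [htdef]; linarith
  have hsquad : s ^ 2 = s + (m : ℝ) := by
    rw [hsdef]; nlinarith [hsq]
  exact quad_contra hs1 hts ht0 (le_trans htr hrle) hsquad
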